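/- arXiv:2306.03655 — 2 statements merged into one kernel-verified Lean document; each statement's English description precedes it below -/
import Mathlib

section
/- Suppose for a sequence of reals (a_t)_{t≥1}: a_{t+1} ≥ (1 - αη_t) a_t - η_t² K whenever a_t ≤ 0, and a_{t+1} ≥ -c η_{t+1} whenever a_t > 0, where η_t = 1/(α√(t+d)), a_1 ≥ -c η_1, and c ≥ K/α · 3 with α > 0, K > 0, d ≥ 0. Then a_t ≥ -c η_t for all t ≥ 1. -/
lemma stmt_14_aux (α K c u v : ℝ) (hα : 0 < α) (hK : 0 < K) (hc0 : 0 < c)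
    (hKc : 3 * K ≤ c * α) (hu1 : 1 ≤ u) (huv : u ≤ v) (hv2 : v ^ 2 = u ^ 2 + 1) :
    -c * (1 / (α * v)) ≤ (1 - α * (1 / (α * u))) * (-c * (1 / (α * u))) - (1 / (α * u)) ^ 2 * K := by
  have hu0 : (0:ℝ) < u := by linarith
  have hv0 : (0:ℝ) < v := by linarith
  have hpos : 0 < c * α := mul_pos hc0 hα
  have hcK : 2 * (c * α) / 3 ≤ c * α - K := by linarith
  have h5 : 2 * u ^ 2 ≤ v * (v + u) := by nlinarith [huv, hu0]
  have h6 : (2 * (c * α) / 3) * (2 * u ^ 2) ≤ (c * α - K) * (v * (v + u)) :=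
    mul_le_mul hcK h5 (by positivity) (by linarith)
  have huu : u ≤ u ^ 2 := by nlinarith [hu1]
  have h7 : c * α * u ≤ (2 * (c * α) / 3) * (2 * u ^ 2) := by nlinarith [hpos, huu]
  have poly : c * α * u ≤ v * (c * α - K) * (v + u) := by nlinarith [h6, h7]
  have hv2u : v ^ 2 * u = (u ^ 2 + 1) * u := by rw [hv2]
  have h3 : 0 ≤ (c * α * u ^ 2 - c * α * u * v + c * α * v - K * v) * (u + v) := by
    nlinarith [poly, hv2, hv2u]
  have h4 : (0:ℝ) < u + v := by linarith
  have hnum : 0 ≤ c * α * u ^ 2 - c * α * u * v + c * α * v - K * v := by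
    nlinarith [h3, h4]
  rw [← sub_nonneg]
  have heq : (1 - α * (1 / (α * u))) * (-c * (1 / (α * u))) - (1 / (α * u)) ^ 2 * K - -c * (1 / (α * v)) = (c * α * u ^ 2 - c * α * u * v + c * α * v - K * v) / (α ^ 2 * u ^ 2 * v) := by
    field_simp
    ring
  rw [heq]
  exact div_nonneg hnum (by positivity)

theorem stmt_14 (α K c d : ℝ) (hα : 0 < α) (hK : 0 < K) (hd : 0 ≤ d)
    (hc : c ≥ 3 * K / α)
    (a : ℕ → ℝ) (η : ℕ → ℝ) (hη : ∀ t, η t = 1 / (α * Real.sqrt (t + d)))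
    (hrec1 : ∀ t, 1 ≤ t → a t ≤ 0 → a (t + 1) ≥ (1 - α * η t) * a t - (η t) ^ 2 * K)
    (hrec2 : ∀ t, 1 ≤ t → 0 < a t → a (t + 1) ≥ -c * η (t + 1))
    (hbase : a 1 ≥ -c * η 1) :
    ∀ t, 1 ≤ t → a t ≥ -c * η t := by
  have hKc : 3 * K ≤ c * α := by
    rw [ge_iff_le, div_le_iff₀ hα] at hc
    linarith
  have hc0 : 0 < c := by nlinarith
  intro t ht
  induction t, ht using Nat.le_induction with
  | base => exact hbase
  | succ t ht ih =>
    rcases le_or_gt (a t) 0 with h0 | h0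
    · have h1 := hrec1 t ht h0
      have hs1 : (1:ℝ) ≤ (t:ℝ) + d := by
        have : (1:ℝ) ≤ (t:ℝ) := by exact_mod_cast ht
        linarith
      have hu1 : 1 ≤ Real.sqrt ((t:ℝ) + d) := by
        rw [show (1:ℝ) = Real.sqrt 1 by simp]
        exact Real.sqrt_le_sqrt hs1
      have huv : Real.sqrt ((t:ℝ) + d) ≤ Real.sqrt (((t:ℝ) + d) + 1) :=
        Real.sqrt_le_sqrt (by linarith)
      have hv2 : Real.sqrt (((t:ℝ) + d) + 1) ^ 2 = Real.sqrt ((t:ℝ) + d) ^ 2 + 1 := by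
        rw [Real.sq_sqrt (by linarith), Real.sq_sqrt (by linarith)]
      have hηt : η t = 1 / (α * Real.sqrt ((t:ℝ) + d)) := hη t
      have hηt1 : η (t + 1) = 1 / (α * Real.sqrt (((t:ℝ) + d) + 1)) := by
        rw [hη]; push_cast; ring_nf
      have key : -c * η (t + 1) ≤ (1 - α * η t) * (-c * η t) - (η t) ^ 2 * K := by
        rw [hηt, hηt1]
        exact stmt_14_aux α K c _ _ hα hK hc0 hKc hu1 huv hv2
      have hcoef : 0 ≤ 1 - α * η t := by
        rw [hηt]
        have hu0 : (0:ℝ) < Real.sqrt ((t:ℝ) + d) := by linarith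
        have h2 : α * (1 / (α * Real.sqrt ((t:ℝ) + d))) = 1 / Real.sqrt ((t:ℝ) + d) := by
          field_simp
        rw [h2]
        have : 1 / Real.sqrt ((t:ℝ) + d) ≤ 1 := by
          rw [div_le_one hu0]; exact hu1
        linarith
      have hmono : (1 - α * η t) * (-c * η t) - (η t) ^ 2 * K ≤ (1 - α * η t) * a t - (η t) ^ 2 * K := by
        have := mul_le_mul_of_nonneg_left ih hcoef
        linarith
      linarith [h1]
    · exact hrec2 t ht h0
end

section
/- If a sequence (x_t) in ℝⁿ satisfies for every t: ∇f_t(x_t)ᵀ(x_t - x*) ≤ (‖x_t - x*‖² - ‖x_{t+1} - x*‖²)/(2η_t) + (η_t/2)V², with η_t = 1/(α√(t+d)) decreasing, ‖x_t - x*‖ ≤ D for all t, and V, D, α > 0, d ≥ 0, then ∑_{t=1}^{T} ∇f_t(x_t)ᵀ(x_t - x*) ≤ V²√(T+d)/α + α D²√(T+d)/2 for all T ≥ 1. -/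
open scoped RealInnerProductSpace

lemma auxA (a b : ℕ → ℝ) (D2 : ℝ) (ha : ∀ t, 0 ≤ a t) (haD : ∀ t, 1 ≤ t → a t ≤ D2)
    (hb0 : 0 ≤ b 1) (hbmono : ∀ t, 1 ≤ t → b t ≤ b (t + 1)) :
    ∀ T, 1 ≤ T → ∑ t ∈ Finset.Icc 1 T, b t * (a t - a (t + 1)) ≤ b T * D2 - b T * a (T + 1) := by
  have hbnn : ∀ t, 1 ≤ t → 0 ≤ b t := by
    intro t ht
    induction t, ht using Nat.le_induction with
    | base => exact hb0
    | succ t ht ih => exact le_trans ih (hbmono t ht)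
  intro T hT
  induction T, hT using Nat.le_induction with
  | base =>
    simp only [Finset.Icc_self, Finset.sum_singleton]
    nlinarith [haD 1 le_rfl, ha 2]
  | succ T hT ih =>
    rw [Finset.sum_Icc_succ_top (by omega)]
    have h1 := haD (T + 1) (by omega)
    have h2 := ha (T + 2)
    have h3 := hbmono T hT
    have hb1 : 0 ≤ b (T + 1) := hbnn (T + 1) (by omega)
    have h4 := ha (T + 1)
    nlinarith

lemma auxB (d : ℝ) (hd : 0 ≤ d) :
    ∀ T : ℕ, 1 ≤ T → ∑ t ∈ Finset.Icc 1 T, 1 / Real.sqrt (t + d) ≤ 2 * Real.sqrt (T + d) := by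
  intro T hT
  induction T, hT using Nat.le_induction with
  | base =>
    simp only [Finset.Icc_self, Finset.sum_singleton]
    have h1 : (1 : ℝ) ≤ Real.sqrt (1 + d) := by
      have := Real.sqrt_le_sqrt (show (1:ℝ) ≤ 1 + d by linarith)
      rwa [Real.sqrt_one] at this
    have h0 : 0 < Real.sqrt ((1 : ℕ) + d) := by
      push_cast; linarith
    rw [div_le_iff₀ h0]
    push_cast at h0 ⊢
    nlinarith
  | succ T hT ih =>
    rw [Finset.sum_Icc_succ_top (by omega)]
    have hu : 0 ≤ Real.sqrt (T + d) := Real.sqrt_nonneg _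
    have hv : 0 < Real.sqrt ((T + 1 : ℕ) + d) := by
      apply Real.sqrt_pos.mpr; push_cast; linarith
    have huv : Real.sqrt (T + d) ≤ Real.sqrt ((T + 1 : ℕ) + d) := by
      apply Real.sqrt_le_sqrt; push_cast; linarith
    have hu2 : Real.sqrt (T + d) ^ 2 = T + d := Real.sq_sqrt (by positivity)
    have hv2 : Real.sqrt ((T + 1 : ℕ) + d) ^ 2 = (T + 1 : ℕ) + d :=
      Real.sq_sqrt (by positivity)
    have key : 1 / Real.sqrt ((T + 1 : ℕ) + d) ≤
        2 * Real.sqrt ((T + 1 : ℕ) + d) - 2 * Real.sqrt (T + d) := by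
      rw [div_le_iff₀ hv]
      push_cast at hu2 hv2 ⊢
      nlinarith [sq_nonneg (Real.sqrt ((T : ℝ) + 1 + d) - Real.sqrt (T + d))]
    linarith

theorem stmt_18 {n : ℕ} (x : ℕ → EuclideanSpace ℝ (Fin n))
    (xstar : EuclideanSpace ℝ (Fin n)) (f : ℕ → EuclideanSpace ℝ (Fin n) → ℝ)
    (V D α d : ℝ) (hV : 0 < V) (hD : 0 < D) (hα : 0 < α) (hd : 0 ≤ d)
    (η : ℕ → ℝ) (hη : ∀ t, η t = 1 / (α * Real.sqrt (t + d)))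
    (hstep : ∀ t, 1 ≤ t →
      ⟪gradient (f t) (x t), x t - xstar⟫ ≤
        (‖x t - xstar‖ ^ 2 - ‖x (t + 1) - xstar‖ ^ 2) / (2 * η t) + η t / 2 * V ^ 2)
    (hbound : ∀ t, 1 ≤ t → ‖x t - xstar‖ ≤ D) :
    ∀ T, 1 ≤ T →
      ∑ t ∈ Finset.Icc 1 T, ⟪gradient (f t) (x t), x t - xstar⟫ ≤
        V ^ 2 * Real.sqrt (T + d) / α + α * D ^ 2 * Real.sqrt (T + d) / 2 := by
  intro T hT
  set a : ℕ → ℝ := fun t => ‖x t - xstar‖ ^ 2 with ha_def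
  set b : ℕ → ℝ := fun t => α * Real.sqrt (t + d) / 2 with hb_def
  have hsqrtpos : ∀ t : ℕ, 1 ≤ t → 0 < Real.sqrt (t + d) := by
    intro t ht
    apply Real.sqrt_pos.mpr
    have : (1 : ℝ) ≤ (t : ℝ) := by exact_mod_cast ht
    linarith
  -- each summand bound
  have hterm : ∀ t, 1 ≤ t →
      ⟪gradient (f t) (x t), x t - xstar⟫ ≤
        b t * (a t - a (t + 1)) + V ^ 2 / (2 * α) * (1 / Real.sqrt (t + d)) := by
    intro t ht
    have h := hstep t ht
    have hs := hsqrtpos t ht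
    have hηt : η t = 1 / (α * Real.sqrt (t + d)) := hη t
    have hηpos : 0 < η t := by rw [hηt]; positivity
    have e1 : (a t - a (t + 1)) / (2 * η t) = b t * (a t - a (t + 1)) := by
      rw [hηt]
      field_simp [hb_def]
      ring
    have e2 : η t / 2 * V ^ 2 = V ^ 2 / (2 * α) * (1 / Real.sqrt (t + d)) := by
      rw [hηt]; field_simp
    calc ⟪gradient (f t) (x t), x t - xstar⟫
        ≤ (a t - a (t + 1)) / (2 * η t) + η t / 2 * V ^ 2 := h
      _ = b t * (a t - a (t + 1)) + V ^ 2 / (2 * α) * (1 / Real.sqrt (t + d)) := by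
          rw [e1, e2]
  have hsum : ∑ t ∈ Finset.Icc 1 T, ⟪gradient (f t) (x t), x t - xstar⟫ ≤
      ∑ t ∈ Finset.Icc 1 T, (b t * (a t - a (t + 1)) + V ^ 2 / (2 * α) * (1 / Real.sqrt (t + d))) := by
    apply Finset.sum_le_sum
    intro t htmem
    exact hterm t (Finset.mem_Icc.mp htmem).1
  rw [Finset.sum_add_distrib, ← Finset.mul_sum] at hsum
  -- bound part A
  have hA : ∑ t ∈ Finset.Icc 1 T, b t * (a t - a (t + 1)) ≤ b T * D ^ 2 - b T * a (T + 1) := by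
    apply auxA
    · intro t; positivity
    · intro t ht
      have := hbound t ht
      have h0 : 0 ≤ ‖x t - xstar‖ := norm_nonneg _
      simp only [ha_def]
      nlinarith
    · have := hsqrtpos 1 le_rfl
      simp only [hb_def]
      push_cast
      positivity
    · intro t ht
      simp only [hb_def]
      have : Real.sqrt (t + d) ≤ Real.sqrt ((t + 1 : ℕ) + d) := by
        apply Real.sqrt_le_sqrt; push_cast; linarith
      nlinarith
    · exact hT
  have hAT : 0 ≤ a (T + 1) := by positivity
  have hbT : 0 ≤ b T := by
    simp only [hb_def]
    have := (hsqrtpos T hT).le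
    positivity
  have hB := auxB d hd T hT
  have hαV : 0 ≤ V ^ 2 / (2 * α) := by positivity
  have := mul_le_mul_of_nonneg_left hB hαV
  have hfinal : ∑ t ∈ Finset.Icc 1 T, ⟪gradient (f t) (x t), x t - xstar⟫ ≤
      b T * D ^ 2 + V ^ 2 / (2 * α) * (2 * Real.sqrt (T + d)) := by
    nlinarith [mul_nonneg hbT hAT]
  calc ∑ t ∈ Finset.Icc 1 T, ⟪gradient (f t) (x t), x t - xstar⟫
      ≤ b T * D ^ 2 + V ^ 2 / (2 * α) * (2 * Real.sqrt (T + d)) := hfinal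
    _ = V ^ 2 * Real.sqrt (T + d) / α + α * D ^ 2 * Real.sqrt (T + d) / 2 := by
        simp only [hb_def]
        field_simp
        ring
end
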